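/- Let Q be a quiver of finite type with positive roots R_+ and Euler cocycle ε. Define a bracket on the free C-vector space with basis {ẽ_α}_{α ∈ R_+} by [ẽ_α, ẽ_β] = ε(α,β) ẽ_{α+β} if α+β ∈ R_+ and 0 otherwise. Then this bracket is antisymmetric and satisfies the Jacobi identity, so it defines a Lie algebra structure. -/

import Mathlib

open Finset

/-- The Euler form of a quiver, extended biadditively from generators. -/
def eulerForm {I Ω : Type} [Fintype I] [Fintype Ω] (src tgt : Ω → I)
    (α β : I → ℤ) : ℤ :=
  (∑ i, α i * β i) - ∑ h, α (src h) * β (tgt h)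

/-- The symmetrized Euler form `⟨α,β⟩ = e(α,β) + e(β,α)`. -/
def symForm {I Ω : Type} [Fintype I] [Fintype Ω] (src tgt : Ω → I)
    (α β : I → ℤ) : ℤ :=
  eulerForm src tgt α β + eulerForm src tgt β α

/-- A positive root of a quiver of finite type: a nonnegative vector of norm 2. -/
def IsPosRoot {I Ω : Type} [Fintype I] [Fintype Ω] (src tgt : Ω → I) (α : I → ℤ) : Prop :=
  (∀ j, 0 ≤ α j) ∧ symForm src tgt α α = 2

/-- The set of positive roots, as a type. -/
def PosRoot {I Ω : Type} [Fintype I] [Fintype Ω] (src tgt : Ω → I) : Type :=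
  {α : I → ℤ // IsPosRoot src tgt α}

/-- The bracket on the free `ℂ`-vector space with basis `{ẽ_α}_{α ∈ R₊}`, defined on
basis vectors by `[ẽ_α, ẽ_β] = ε(α,β) ẽ_{α+β}` if `α+β ∈ R₊` and `0` otherwise, where
`ε(α,β) = (-1)^{e(α,β)}` is the Euler cocycle, and extended bilinearly. -/
noncomputable def epsilonBracket {I Ω : Type} [Fintype I] [Fintype Ω] (src tgt : Ω → I)
    (f g : PosRoot src tgt →₀ ℂ) : PosRoot src tgt →₀ ℂ := by
  classical
  exact f.sum fun α a => g.sum fun β b =>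
    if h : IsPosRoot src tgt (α.1 + β.1) then
      (a * b * (-1 : ℂ) ^ eulerForm src tgt α.1 β.1) • Finsupp.single ⟨α.1 + β.1, h⟩ 1
    else 0

section Aux
set_option linter.unusedSectionVars false

variable {I Ω : Type} [Fintype I] [Fintype Ω] (src tgt : Ω → I)

lemma eulerForm_add_left' (α α' β : I → ℤ) :
    eulerForm src tgt (α + α') β = eulerForm src tgt α β + eulerForm src tgt α' β := by
  simp [eulerForm, add_mul, Finset.sum_add_distrib]; ring

lemma eulerForm_add_right' (α β β' : I → ℤ) :
    eulerForm src tgt α (β + β') = eulerForm src tgt α β + eulerForm src tgt α β' := by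
  simp [eulerForm, mul_add, Finset.sum_add_distrib]; ring

lemma symForm_comm' (α β : I → ℤ) : symForm src tgt α β = symForm src tgt β α :=
  add_comm _ _

lemma symForm_add_left' (α α' β : I → ℤ) :
    symForm src tgt (α + α') β = symForm src tgt α β + symForm src tgt α' β := by
  simp [symForm, eulerForm_add_left', eulerForm_add_right']; ring

lemma symForm_add_right' (α β β' : I → ℤ) :
    symForm src tgt α (β + β') = symForm src tgt α β + symForm src tgt α β' := by
  simp [symForm, eulerForm_add_left', eulerForm_add_right']; ring

lemma eulerForm_expand [DecidableEq I] (α β : I → ℤ) :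
    ∑ i, ∑ j, α i * β j * eulerForm src tgt (Pi.single i 1) (Pi.single j 1)
      = eulerForm src tgt α β := by
  simp only [eulerForm, Pi.single_apply, mul_sub, Finset.mul_sum, Finset.sum_sub_distrib,
    mul_ite, mul_one, mul_zero, ite_mul, zero_mul, one_mul]
  congr 1
  · simp [Finset.sum_ite_eq, Finset.sum_ite_eq']
  · rw [show ∀ F : I → I → ℤ, (∑ x : I, ∑ y : I, F x y) = ∑ y : I, ∑ x : I, F x y from
      fun F => Finset.sum_comm]
    rw [Finset.sum_congr rfl fun y _ => Finset.sum_comm]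
    rw [Finset.sum_congr rfl fun y _ => Finset.sum_congr rfl fun h _ =>
      show (∑ x : I, if tgt h = y then if src h = x then α x * β y else 0 else 0)
        = if tgt h = y then α (src h) * β y else 0 by
      split <;> simp [Finset.sum_ite_eq]]
    rw [Finset.sum_comm]
    simp [Finset.sum_ite_eq]

lemma symForm_expand [DecidableEq I] (α β : I → ℤ) :
    ∑ i, ∑ j, α i * β j * symForm src tgt (Pi.single i 1) (Pi.single j 1)
      = symForm src tgt α β := by
  simp only [symForm, mul_add, Finset.sum_add_distrib]
  congr 1
  · exact eulerForm_expand src tgt α β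
  · rw [← eulerForm_expand src tgt β α]
    rw [show ∀ F : I → I → ℤ, (∑ x : I, ∑ y : I, F x y) = ∑ y : I, ∑ x : I, F x y from
      fun F => Finset.sum_comm]
    exact Finset.sum_congr rfl fun i _ => Finset.sum_congr rfl fun j _ => by ring

variable [DecidableEq I]
variable (hpos : ∀ v : I → ℝ, v ≠ 0 →
      0 < ∑ i, ∑ j, v i * v j * ((symForm src tgt (Pi.single i 1) (Pi.single j 1) : ℤ) : ℝ))

include hpos in
lemma symForm_self_pos (v : I → ℤ) (hv : v ≠ 0) : 0 < symForm src tgt v v := by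
  have h := hpos (fun i => (v i : ℝ)) (by
    intro h0
    apply hv
    funext i
    have := congrFun h0 i
    simpa using this)
  have key : ((symForm src tgt v v : ℤ) : ℝ)
      = ∑ i, ∑ j, (v i : ℝ) * (v j : ℝ) * ((symForm src tgt (Pi.single i 1) (Pi.single j 1) : ℤ) : ℝ) := by
    rw [← symForm_expand src tgt v v]
    push_cast
    rfl
  have h2 : (0:ℝ) < ((symForm src tgt v v : ℤ) : ℝ) := by rw [key]; exact h
  exact_mod_cast h2

include hpos in
lemma symForm_ge_neg_one (x y : PosRoot src tgt) : -1 ≤ symForm src tgt x.1 y.1 := by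
  have hxne : x.1 + y.1 ≠ 0 := by
    intro h0
    have hx0 : x.1 = 0 := by
      funext i
      have := congrFun h0 i
      have hx := x.2.1 i
      have hy := y.2.1 i
      simp only [Pi.add_apply, Pi.zero_apply] at this
      simp only [Pi.zero_apply]
      omega
    have := x.2.2
    rw [hx0] at this
    simp [symForm, eulerForm] at this
  have h := symForm_self_pos src tgt hpos (x.1 + y.1) hxne
  rw [symForm_add_left', symForm_add_right', symForm_add_right'] at h
  have h1 := x.2.2
  have h2 := y.2.2
  have h3 := symForm_comm' src tgt x.1 y.1
  omega

lemma isPosRoot_add_iff (x y : PosRoot src tgt) :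
    IsPosRoot src tgt (x.1 + y.1) ↔ symForm src tgt x.1 y.1 = -1 := by
  have hexp : symForm src tgt (x.1 + y.1) (x.1 + y.1) = 4 + 2 * symForm src tgt x.1 y.1 := by
    rw [symForm_add_left', symForm_add_right', symForm_add_right']
    have h1 := x.2.2
    have h2 := y.2.2
    have h3 := symForm_comm' src tgt x.1 y.1
    omega
  constructor
  · intro h
    have := h.2
    omega
  · intro h
    refine ⟨fun j => ?_, by omega⟩
    have := x.2.1 j
    have := y.2.1 j
    simp only [Pi.add_apply]
    omega

lemma neg_one_zpow_add (m n : ℤ) : (-1 : ℂ) ^ (m + n) = (-1 : ℂ) ^ m * (-1 : ℂ) ^ n :=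
  zpow_add₀ (by norm_num) m n

lemma neg_one_zpow_odd_diff (m n : ℤ) (h : Odd (m - n)) :
    (-1 : ℂ) ^ m = -((-1 : ℂ) ^ n) := by
  have : (-1 : ℂ) ^ m = (-1 : ℂ) ^ (n + (m - n)) := by ring_nf
  rw [this, neg_one_zpow_add, Odd.neg_one_zpow h]
  ring

end Aux

section Bracket
set_option linter.unusedSectionVars false

variable {I Ω : Type} [Fintype I] [Fintype Ω] (src tgt : Ω → I)

lemma eb_zero_left (g : PosRoot src tgt →₀ ℂ) : epsilonBracket src tgt 0 g = 0 := by
  unfold epsilonBracket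
  exact Finsupp.sum_zero_index

lemma eb_zero_right (f : PosRoot src tgt →₀ ℂ) : epsilonBracket src tgt f 0 = 0 := by
  unfold epsilonBracket
  simp [Finsupp.sum_zero_index]

open scoped Classical in
lemma eb_single_single (α β : PosRoot src tgt) (a b : ℂ) :
    epsilonBracket src tgt (Finsupp.single α a) (Finsupp.single β b) =
      if h : IsPosRoot src tgt (α.1 + β.1) then
        (a * b * (-1 : ℂ) ^ eulerForm src tgt α.1 β.1) • Finsupp.single ⟨α.1 + β.1, h⟩ 1
      else 0 := by
  unfold epsilonBracket
  rw [Finsupp.sum_single_index (by simp)]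
  rw [Finsupp.sum_single_index (by split <;> simp)]

lemma eb_add_left (f f' g : PosRoot src tgt →₀ ℂ) :
    epsilonBracket src tgt (f + f') g =
      epsilonBracket src tgt f g + epsilonBracket src tgt f' g := by
  unfold epsilonBracket
  refine Finsupp.sum_add_index' (fun α => ?_) (fun α a a' => ?_)
  · simp
  · rw [← Finsupp.sum_add]
    refine Finsupp.sum_congr fun β _ => ?_
    split
    · rw [← add_smul]
      congr 1
      ring
    · simp

lemma eb_add_right (f g g' : PosRoot src tgt →₀ ℂ) :
    epsilonBracket src tgt f (g + g') =
      epsilonBracket src tgt f g + epsilonBracket src tgt f g' := by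
  unfold epsilonBracket
  rw [← Finsupp.sum_add]
  refine Finsupp.sum_congr fun α _ => ?_
  refine Finsupp.sum_add_index' (fun β => by split <;> simp) (fun β b b' => ?_)
  split
  · rw [← add_smul]
    congr 1
    ring
  · simp

end Bracket

section Anti
set_option linter.unusedSectionVars false

variable {I Ω : Type} [Fintype I] [Fintype Ω] [DecidableEq I] (src tgt : Ω → I)

lemma eb_single_antisymm (α β : PosRoot src tgt) (a b : ℂ) :
    epsilonBracket src tgt (Finsupp.single α a) (Finsupp.single β b) =
      - epsilonBracket src tgt (Finsupp.single β b) (Finsupp.single α a) := by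
  rw [eb_single_single, eb_single_single]
  by_cases h : IsPosRoot src tgt (α.1 + β.1)
  · have h' : IsPosRoot src tgt (β.1 + α.1) := by rwa [add_comm]
    rw [dif_pos h, dif_pos h']
    have hsym : symForm src tgt α.1 β.1 = -1 := (isPosRoot_add_iff src tgt α β).1 h
    have hb : (⟨β.1 + α.1, h'⟩ : PosRoot src tgt) = ⟨α.1 + β.1, h⟩ := Subtype.ext (add_comm _ _)
    rw [hb, ← neg_smul]
    congr 1
    rw [neg_one_zpow_odd_diff (eulerForm src tgt α.1 β.1) (eulerForm src tgt β.1 α.1)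
      ⟨-(eulerForm src tgt β.1 α.1) - 1, by simp only [symForm] at hsym; linarith⟩]
    ring
  · have h' : ¬ IsPosRoot src tgt (β.1 + α.1) := by rwa [add_comm]
    rw [dif_neg h, dif_neg h', neg_zero]

lemma eb_antisymm_single_left (α : PosRoot src tgt) (a : ℂ) :
    ∀ g, epsilonBracket src tgt (Finsupp.single α a) g =
      - epsilonBracket src tgt g (Finsupp.single α a) := by
  intro g
  induction g using Finsupp.induction with
  | zero => rw [eb_zero_left, eb_zero_right, neg_zero]
  | single_add β b g _ _ ih =>
    rw [eb_add_left, eb_add_right, ih, eb_single_antisymm]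
    abel

lemma eb_antisymm (f g : PosRoot src tgt →₀ ℂ) :
    epsilonBracket src tgt f g = - epsilonBracket src tgt g f := by
  induction f using Finsupp.induction with
  | zero => rw [eb_zero_left, eb_zero_right, neg_zero]
  | single_add α a f _ _ ih =>
    rw [eb_add_left, eb_add_right, ih, eb_antisymm_single_left]
    abel

end Anti

section Jacobi
set_option linter.unusedSectionVars false

variable {I Ω : Type} [Fintype I] [Fintype Ω] [DecidableEq I] (src tgt : Ω → I)

lemma neg_one_zpow_even_diff (m n : ℤ) (h : Even (m - n)) :
    (-1 : ℂ) ^ m = (-1 : ℂ) ^ n := by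
  have hm : (-1 : ℂ) ^ m = (-1 : ℂ) ^ (n + (m - n)) := by ring_nf
  rw [hm, neg_one_zpow_add, Even.neg_one_zpow h, mul_one]

lemma jac_term_not_root (α β γ : PosRoot src tgt) (a b c : ℂ)
    (hs : ¬ IsPosRoot src tgt (α.1 + β.1 + γ.1)) :
    epsilonBracket src tgt (Finsupp.single α a)
      (epsilonBracket src tgt (Finsupp.single β b) (Finsupp.single γ c)) = 0 := by
  rw [eb_single_single]
  by_cases hbc : IsPosRoot src tgt (β.1 + γ.1)
  · rw [dif_pos hbc]
    erw [Finsupp.smul_single', mul_one]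
    rw [eb_single_single src tgt α ⟨β.1 + γ.1, hbc⟩,
      dif_neg (fun hh => hs (by rwa [← add_assoc] at hh))]
  · rw [dif_neg hbc, eb_zero_right]

lemma jac_case (α β γ : PosRoot src tgt) (a b c : ℂ)
    (hab : symForm src tgt α.1 β.1 = 0)
    (hbc : symForm src tgt β.1 γ.1 = -1)
    (hca : symForm src tgt γ.1 α.1 = -1) :
    epsilonBracket src tgt (Finsupp.single α a)
        (epsilonBracket src tgt (Finsupp.single β b) (Finsupp.single γ c)) +
      epsilonBracket src tgt (Finsupp.single β b)
        (epsilonBracket src tgt (Finsupp.single γ c) (Finsupp.single α a)) +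
      epsilonBracket src tgt (Finsupp.single γ c)
        (epsilonBracket src tgt (Finsupp.single α a) (Finsupp.single β b)) = 0 := by
  have hbc' : IsPosRoot src tgt (β.1 + γ.1) := (isPosRoot_add_iff src tgt β γ).2 hbc
  have hca' : IsPosRoot src tgt (γ.1 + α.1) := (isPosRoot_add_iff src tgt γ α).2 hca
  have hab' : ¬ IsPosRoot src tgt (α.1 + β.1) := by
    rw [isPosRoot_add_iff src tgt α β]; omega
  have hac : symForm src tgt α.1 γ.1 = -1 := (symForm_comm' src tgt γ.1 α.1) ▸ hca
  have hba : symForm src tgt β.1 α.1 = 0 := (symForm_comm' src tgt α.1 β.1) ▸ hab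
  have ht1 : IsPosRoot src tgt (α.1 + (β.1 + γ.1)) := by
    refine (isPosRoot_add_iff src tgt α ⟨β.1 + γ.1, hbc'⟩).2 ?_
    show symForm src tgt α.1 (β.1 + γ.1) = -1
    rw [symForm_add_right']; omega
  have ht2 : IsPosRoot src tgt (β.1 + (γ.1 + α.1)) := by
    refine (isPosRoot_add_iff src tgt β ⟨γ.1 + α.1, hca'⟩).2 ?_
    show symForm src tgt β.1 (γ.1 + α.1) = -1
    rw [symForm_add_right']; omega
  -- third term vanishes
  rw [eb_single_single src tgt α β, dif_neg hab', eb_zero_right, add_zero]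
  rw [eb_single_single src tgt β γ, dif_pos hbc',
    eb_single_single src tgt γ α, dif_pos hca']
  erw [Finsupp.smul_single', Finsupp.smul_single', mul_one, mul_one]
  rw [eb_single_single src tgt α ⟨β.1 + γ.1, hbc'⟩,
    eb_single_single src tgt β ⟨γ.1 + α.1, hca'⟩,
    dif_pos ht1, dif_pos ht2]
  have hroots : (⟨β.1 + (γ.1 + α.1), ht2⟩ : PosRoot src tgt)
      = ⟨α.1 + (β.1 + γ.1), ht1⟩ := Subtype.ext (by ring)
  rw [hroots, ← add_smul]
  suffices hk : a * (b * c * (-1 : ℂ) ^ eulerForm src tgt β.1 γ.1) *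
        (-1 : ℂ) ^ eulerForm src tgt α.1 (β.1 + γ.1)
      + b * (c * a * (-1 : ℂ) ^ eulerForm src tgt γ.1 α.1) *
        (-1 : ℂ) ^ eulerForm src tgt β.1 (γ.1 + α.1) = 0 by
    rw [hk, zero_smul]
  rw [eulerForm_add_right', eulerForm_add_right', neg_one_zpow_add, neg_one_zpow_add]
  simp only [symForm] at hab hac
  have hx : (-1 : ℂ) ^ eulerForm src tgt α.1 β.1 = (-1 : ℂ) ^ eulerForm src tgt β.1 α.1 :=
    neg_one_zpow_even_diff _ _ ⟨-(eulerForm src tgt β.1 α.1), by linarith⟩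
  have hz : (-1 : ℂ) ^ eulerForm src tgt α.1 γ.1 = -((-1 : ℂ) ^ eulerForm src tgt γ.1 α.1) :=
    neg_one_zpow_odd_diff _ _ ⟨-(eulerForm src tgt γ.1 α.1) - 1, by linarith⟩
  rw [hx, hz]
  ring

lemma jac_single (α β γ : PosRoot src tgt) (a b c : ℂ)
    (hpos : ∀ v : I → ℝ, v ≠ 0 →
      0 < ∑ i, ∑ j, v i * v j * ((symForm src tgt (Pi.single i 1) (Pi.single j 1) : ℤ) : ℝ)) :
    epsilonBracket src tgt (Finsupp.single α a)
        (epsilonBracket src tgt (Finsupp.single β b) (Finsupp.single γ c)) +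
      epsilonBracket src tgt (Finsupp.single β b)
        (epsilonBracket src tgt (Finsupp.single γ c) (Finsupp.single α a)) +
      epsilonBracket src tgt (Finsupp.single γ c)
        (epsilonBracket src tgt (Finsupp.single α a) (Finsupp.single β b)) = 0 := by
  by_cases hs : IsPosRoot src tgt (α.1 + β.1 + γ.1)
  · have h2 := hs.2
    simp only [symForm_add_left', symForm_add_right'] at h2
    have c1 := symForm_comm' src tgt α.1 β.1
    have c2 := symForm_comm' src tgt β.1 γ.1
    have c3 := symForm_comm' src tgt γ.1 α.1
    have d1 := α.2.2
    have d2 := β.2.2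
    have d3 := γ.2.2
    have b1 := symForm_ge_neg_one src tgt hpos α β
    have b2 := symForm_ge_neg_one src tgt hpos β γ
    have b3 := symForm_ge_neg_one src tgt hpos γ α
    have hcases : (symForm src tgt α.1 β.1 = 0 ∧ symForm src tgt β.1 γ.1 = -1 ∧
          symForm src tgt γ.1 α.1 = -1) ∨
        (symForm src tgt β.1 γ.1 = 0 ∧ symForm src tgt γ.1 α.1 = -1 ∧
          symForm src tgt α.1 β.1 = -1) ∨
        (symForm src tgt γ.1 α.1 = 0 ∧ symForm src tgt α.1 β.1 = -1 ∧
          symForm src tgt β.1 γ.1 = -1) := by omega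
    rcases hcases with ⟨h1', h2', h3'⟩ | ⟨h1', h2', h3'⟩ | ⟨h1', h2', h3'⟩
    · exact jac_case src tgt α β γ a b c h1' h2' h3'
    · rw [add_rotate]
      exact jac_case src tgt β γ α b c a h1' h2' h3'
    · rw [add_rotate, add_rotate]
      exact jac_case src tgt γ α β c a b h1' h2' h3'
  · rw [jac_term_not_root src tgt α β γ a b c hs,
      jac_term_not_root src tgt β γ α b c a (by rwa [show β.1 + γ.1 + α.1 = α.1 + β.1 + γ.1 from by ring]),
      jac_term_not_root src tgt γ α β c a b (by rwa [show γ.1 + α.1 + β.1 = α.1 + β.1 + γ.1 from by ring])]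
    simp

end Jacobi

section Final
set_option linter.unusedSectionVars false

variable {I Ω : Type} [Fintype I] [Fintype Ω] [DecidableEq I] (src tgt : Ω → I)
variable (hpos : ∀ v : I → ℝ, v ≠ 0 →
      0 < ∑ i, ∑ j, v i * v j * ((symForm src tgt (Pi.single i 1) (Pi.single j 1) : ℤ) : ℝ))

include hpos in
lemma jac_ssf (α β : PosRoot src tgt) (a b : ℂ) (h : PosRoot src tgt →₀ ℂ) :
    epsilonBracket src tgt (Finsupp.single α a)
        (epsilonBracket src tgt (Finsupp.single β b) h) +
      epsilonBracket src tgt (Finsupp.single β b)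
        (epsilonBracket src tgt h (Finsupp.single α a)) +
      epsilonBracket src tgt h
        (epsilonBracket src tgt (Finsupp.single α a) (Finsupp.single β b)) = 0 := by
  induction h using Finsupp.induction with
  | zero => simp only [eb_zero_left, eb_zero_right, add_zero, zero_add]
  | single_add γ c h _ _ ih =>
    have h1 := jac_single src tgt α β γ a b c hpos
    simp only [eb_add_left, eb_add_right]
    rw [show (0 : PosRoot src tgt →₀ ℂ) =
      (epsilonBracket src tgt (Finsupp.single α a)
          (epsilonBracket src tgt (Finsupp.single β b) (Finsupp.single γ c)) +
        epsilonBracket src tgt (Finsupp.single β b)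
          (epsilonBracket src tgt (Finsupp.single γ c) (Finsupp.single α a)) +
        epsilonBracket src tgt (Finsupp.single γ c)
          (epsilonBracket src tgt (Finsupp.single α a) (Finsupp.single β b))) +
      (epsilonBracket src tgt (Finsupp.single α a)
          (epsilonBracket src tgt (Finsupp.single β b) h) +
        epsilonBracket src tgt (Finsupp.single β b)
          (epsilonBracket src tgt h (Finsupp.single α a)) +
        epsilonBracket src tgt h
          (epsilonBracket src tgt (Finsupp.single α a) (Finsupp.single β b)))
      from by rw [h1, ih, add_zero]]
    abel

include hpos in
lemma jac_sff (α : PosRoot src tgt) (a : ℂ) (g h : PosRoot src tgt →₀ ℂ) :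
    epsilonBracket src tgt (Finsupp.single α a) (epsilonBracket src tgt g h) +
      epsilonBracket src tgt g (epsilonBracket src tgt h (Finsupp.single α a)) +
      epsilonBracket src tgt h (epsilonBracket src tgt (Finsupp.single α a) g) = 0 := by
  induction g using Finsupp.induction with
  | zero => simp only [eb_zero_left, eb_zero_right, add_zero, zero_add]
  | single_add β b g _ _ ih =>
    have h1 := jac_ssf src tgt hpos α β a b h
    simp only [eb_add_left, eb_add_right]
    rw [show (0 : PosRoot src tgt →₀ ℂ) =
      (epsilonBracket src tgt (Finsupp.single α a)
          (epsilonBracket src tgt (Finsupp.single β b) h) +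
        epsilonBracket src tgt (Finsupp.single β b)
          (epsilonBracket src tgt h (Finsupp.single α a)) +
        epsilonBracket src tgt h
          (epsilonBracket src tgt (Finsupp.single α a) (Finsupp.single β b))) +
      (epsilonBracket src tgt (Finsupp.single α a) (epsilonBracket src tgt g h) +
        epsilonBracket src tgt g (epsilonBracket src tgt h (Finsupp.single α a)) +
        epsilonBracket src tgt h (epsilonBracket src tgt (Finsupp.single α a) g))
      from by rw [h1, ih, add_zero]]
    abel

include hpos in
lemma jac_fff (f g h : PosRoot src tgt →₀ ℂ) :
    epsilonBracket src tgt f (epsilonBracket src tgt g h) +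
      epsilonBracket src tgt g (epsilonBracket src tgt h f) +
      epsilonBracket src tgt h (epsilonBracket src tgt f g) = 0 := by
  induction f using Finsupp.induction with
  | zero => simp only [eb_zero_left, eb_zero_right, add_zero, zero_add]
  | single_add α a f _ _ ih =>
    have h1 := jac_sff src tgt hpos α a g h
    simp only [eb_add_left, eb_add_right]
    rw [show (0 : PosRoot src tgt →₀ ℂ) =
      (epsilonBracket src tgt (Finsupp.single α a) (epsilonBracket src tgt g h) +
        epsilonBracket src tgt g (epsilonBracket src tgt h (Finsupp.single α a)) +
        epsilonBracket src tgt h (epsilonBracket src tgt (Finsupp.single α a) g)) +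
      (epsilonBracket src tgt f (epsilonBracket src tgt g h) +
        epsilonBracket src tgt g (epsilonBracket src tgt h f) +
        epsilonBracket src tgt h (epsilonBracket src tgt f g))
      from by rw [h1, ih, add_zero]]
    abel

end Final

theorem epsilonBracket_lie {I Ω : Type} [Fintype I] [Fintype Ω] [DecidableEq I]
    (src tgt : Ω → I)
    (hpos : ∀ v : I → ℝ, v ≠ 0 →
      0 < ∑ i, ∑ j, v i * v j * ((symForm src tgt (Pi.single i 1) (Pi.single j 1) : ℤ) : ℝ)) :
    (∀ f g : PosRoot src tgt →₀ ℂ,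
      epsilonBracket src tgt f g = - epsilonBracket src tgt g f) ∧
    (∀ f g h : PosRoot src tgt →₀ ℂ,
      epsilonBracket src tgt f (epsilonBracket src tgt g h) +
        epsilonBracket src tgt g (epsilonBracket src tgt h f) +
        epsilonBracket src tgt h (epsilonBracket src tgt f g) = 0) :=
  ⟨eb_antisymm src tgt, jac_fff src tgt hpos⟩
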